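/- Let N be a positive integer and t > -log N. For all n ≥ N, one has θ(t,N) - θ_n(t,N) ≤ ∫_n^∞ dx/(24 x^2(t+log x)^2) + 1/(24(n+1/2)(t+log(n+1/2))^2) + 1/(24 n^2(t+log n)^2) + 1/(12 n^2 (t+log n)^3), and θ(t,N) - θ_n(t,N) ≥ ∫_{n+1}^∞ dx/(24 x^2(t+log x)^2) + 1/(24(n+1)(t+log(n+1))^2), where θ_n(t,N) = ∫_N^n dx/(t+log x) - Σ_{k=N}^{n-1} 1/(H_k - γ + t) and θ(t,N) is its limit as n → ∞. -/

import Mathlib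

open Real Filter MeasureTheory Finset Topology Set

noncomputable def qq (t : ℝ) (a j : ℕ) (x : ℝ) : ℝ := 1/(x^a * (t + Real.log x)^j)

lemma qq_pos {t x : ℝ} (a j : ℕ) (hx : 0 < x) (hu : 0 < t + Real.log x) :
    0 < qq t a j x := by
  unfold qq; positivity

lemma hasDerivAt_qq (t : ℝ) (a j : ℕ) {x : ℝ} (hx : 0 < x) (hu : t + Real.log x ≠ 0) :
    HasDerivAt (qq t a j)
      (-((a:ℝ) * qq t (a+1) j x + (j:ℝ) * qq t (a+1) (j+1) x)) x := by
  have hlog := (Real.hasDerivAt_log hx.ne').const_add t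
  have hv : HasDerivAt (fun y => y^a * (t + Real.log y)^j)
      ((a:ℝ) * x ^ (a-1) * (t + Real.log x)^j
        + x^a * ((j:ℝ) * (t + Real.log x) ^ (j-1) * x⁻¹)) x :=
    (hasDerivAt_pow a x).mul (hlog.pow j)
  have hvne : x^a * (t + Real.log x)^j ≠ 0 := by positivity
  have := hv.inv hvne
  have heq : ∀ b k : ℕ, qq t b k = fun y => (y^b * (t + Real.log y)^k)⁻¹ := by
    intro b k; funext y; simp [qq, one_div]
  rw [heq, heq, heq]
  refine this.congr_deriv ?_
  rcases a with _|a <;> rcases j with _|j <;>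
    simp only [Nat.add_sub_cancel, pow_zero] <;> field_simp <;> ring

section derivs
variable {t x : ℝ}


lemma hdA (hx : 0 < x) (hu : t + Real.log x ≠ 0) :
    HasDerivAt (qq t 0 1) (-(qq t 1 2 x)) x := by
  convert hasDerivAt_qq t 0 1 hx hu using 1
  try (push_cast; ring)

lemma hdB (hx : 0 < x) (hu : t + Real.log x ≠ 0) :
    HasDerivAt (fun y => -(qq t 1 2 y)) (qq t 2 2 x + 2 * qq t 2 3 x) x := by
  refine (hasDerivAt_qq t 1 2 hx hu).neg.congr_deriv ?_
  try (push_cast; ring)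

lemma hdC (hx : 0 < x) (hu : t + Real.log x ≠ 0) :
    HasDerivAt (fun y => qq t 2 2 y + 2 * qq t 2 3 y)
      (-(2 * qq t 3 2 x + (6 * qq t 3 3 x + 6 * qq t 3 4 x))) x := by
  refine ((hasDerivAt_qq t 2 2 hx hu).add ((hasDerivAt_qq t 2 3 hx hu).const_mul 2)).congr_deriv ?_
  try (push_cast; ring)

lemma hdD (hx : 0 < x) (hu : t + Real.log x ≠ 0) :
    HasDerivAt (fun y => -(2 * qq t 3 2 y + (6 * qq t 3 3 y + 6 * qq t 3 4 y)))
      (6 * qq t 4 2 x + 22 * qq t 4 3 x + 36 * qq t 4 4 x + 24 * qq t 4 5 x) x := by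
  refine (((hasDerivAt_qq t 3 2 hx hu).const_mul 2).add
    (((hasDerivAt_qq t 3 3 hx hu).const_mul 6).add
      ((hasDerivAt_qq t 3 4 hx hu).const_mul 6))).neg.congr_deriv ?_
  try (push_cast; ring)

lemma hdG (hx : 0 < x) (hu : t + Real.log x ≠ 0) :
    HasDerivAt (qq t 2 2) (-(2 * qq t 3 2 x + 2 * qq t 3 3 x)) x := by
  convert hasDerivAt_qq t 2 2 hx hu using 1
  try (push_cast; ring)

lemma hdG' (hx : 0 < x) (hu : t + Real.log x ≠ 0) :
    HasDerivAt (fun y => -(2 * qq t 3 2 y + 2 * qq t 3 3 y))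
      (6 * qq t 4 2 x + 10 * qq t 4 3 x + 6 * qq t 4 4 x) x := by
  refine (((hasDerivAt_qq t 3 2 hx hu).const_mul 2).add
    ((hasDerivAt_qq t 3 3 hx hu).const_mul 2)).neg.congr_deriv ?_
  try (push_cast; ring)

end derivs

lemma quad_upper {h h' h'' : ℝ → ℝ} {a b m C : ℝ} (hm : m ∈ Set.Icc a b)
    (Dh : ∀ y ∈ Set.Icc a b, HasDerivAt h (h' y) y)
    (Dh' : ∀ y ∈ Set.Icc a b, HasDerivAt h' (h'' y) y)
    (hC : ∀ y ∈ Set.Icc a b, h'' y ≤ C) :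
    ∀ x ∈ Set.Icc a b, h x ≤ h m + h' m * (x - m) + C * (x - m)^2 / 2 := by
  intro x hx
  set φ : ℝ → ℝ := fun y => h m + h' m * (y - m) + C * (y - m)^2 / 2 - h y with hφ
  set φ' : ℝ → ℝ := fun y => h' m + C * (y - m) - h' y with hφ'
  have Dφ : ∀ y ∈ Set.Icc a b, HasDerivAt φ (φ' y) y := by
    intro y hy
    have p1 : HasDerivAt (fun z : ℝ => h m + h' m * (z - m) + C * (z - m)^2 / 2)
        (h' m + C * (y - m)) y := by
      have l1 : HasDerivAt (fun z : ℝ => z - m) 1 y := (hasDerivAt_id y).sub_const m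
      have l2 := ((l1.pow 2).const_mul C).div_const 2
      have l3 := ((l1.const_mul (h' m)).const_add (h m)).add l2
      refine l3.congr_deriv ?_; push_cast; ring
    exact p1.sub (Dh y hy)
  have Dφ' : ∀ y ∈ Set.Icc a b, HasDerivAt φ' (C - h'' y) y := by
    intro y hy
    have l1 : HasDerivAt (fun z : ℝ => h' m + C * (z - m)) C y := by
      have := (((hasDerivAt_id y).sub_const m).const_mul C).const_add (h' m)
      simpa using this
    exact l1.sub (Dh' y hy)
  have hmono : MonotoneOn φ' (Set.Icc a b) := by
    apply monotoneOn_of_deriv_nonneg (convex_Icc a b)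
    · exact fun y hy => (Dφ' y hy).continuousAt.continuousWithinAt
    · intro y hy
      rw [interior_Icc] at hy
      exact ((Dφ' y (Set.Ioo_subset_Icc_self hy)).differentiableAt).differentiableWithinAt
    · intro y hy
      rw [interior_Icc] at hy
      rw [(Dφ' y (Set.Ioo_subset_Icc_self hy)).deriv]
      have := hC y (Set.Ioo_subset_Icc_self hy); linarith
  have hφ'm : φ' m = 0 := by simp [hφ']
  have hφm : φ m = 0 := by simp [hφ]
  have key : 0 ≤ φ x := by
    rcases le_total x m with hxm | hmx
    · -- φ antitone on [a,m]
      have hanti : AntitoneOn φ (Set.Icc a m) := by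
        apply antitoneOn_of_deriv_nonpos (convex_Icc a m)
        · intro y hy
          exact (Dφ y ⟨hy.1, le_trans hy.2 hm.2⟩).continuousAt.continuousWithinAt
        · intro y hy
          rw [interior_Icc] at hy
          exact (Dφ y ⟨le_of_lt hy.1, le_trans (le_of_lt hy.2) hm.2⟩).differentiableAt.differentiableWithinAt
        · intro y hy
          rw [interior_Icc] at hy
          have hy' : y ∈ Set.Icc a b := ⟨le_of_lt hy.1, le_trans (le_of_lt hy.2) hm.2⟩
          rw [(Dφ y hy').deriv]
          have := hmono hy' hm (le_of_lt hy.2)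
          linarith [hφ'm ▸ this]
      have := hanti ⟨hx.1, hxm⟩ ⟨hm.1, le_refl m⟩ hxm
      linarith [hφm ▸ this]
    · have hmonoφ : MonotoneOn φ (Set.Icc m b) := by
        apply monotoneOn_of_deriv_nonneg (convex_Icc m b)
        · intro y hy
          exact (Dφ y ⟨le_trans hm.1 hy.1, hy.2⟩).continuousAt.continuousWithinAt
        · intro y hy
          rw [interior_Icc] at hy
          exact (Dφ y ⟨le_trans hm.1 (le_of_lt hy.1), le_of_lt hy.2⟩).differentiableAt.differentiableWithinAt
        · intro y hy
          rw [interior_Icc] at hy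
          have hy' : y ∈ Set.Icc a b := ⟨le_trans hm.1 (le_of_lt hy.1), le_of_lt hy.2⟩
          rw [(Dφ y hy').deriv]
          have := hmono hm hy' (le_of_lt hy.1)
          linarith [hφ'm ▸ this]
      have := hmonoφ ⟨le_refl m, hm.2⟩ ⟨hmx, hx.2⟩ hmx
      linarith [hφm ▸ this]
  simp only [hφ] at key; linarith

lemma quad_lower {h h' h'' : ℝ → ℝ} {a b m C : ℝ} (hm : m ∈ Set.Icc a b)
    (Dh : ∀ y ∈ Set.Icc a b, HasDerivAt h (h' y) y)
    (Dh' : ∀ y ∈ Set.Icc a b, HasDerivAt h' (h'' y) y)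
    (hC : ∀ y ∈ Set.Icc a b, C ≤ h'' y) :
    ∀ x ∈ Set.Icc a b, h m + h' m * (x - m) + C * (x - m)^2 / 2 ≤ h x := by
  intro x hx
  have := quad_upper (h := fun y => -h y) (h' := fun y => -h' y) (h'' := fun y => -h'' y)
    (C := -C) hm (fun y hy => (Dh y hy).neg) (fun y hy => (Dh' y hy).neg)
    (fun y hy => by simpa using hC y hy) x hx
  linarith

/-- FTC evaluation of the quadratic `Q(x) = A + B(x-m) + C(x-m)²/2` over `[a,a+1]`
with `m = a + 1/2`. -/
lemma integral_quad (a A B C : ℝ) :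
    (∫ x in a..(a+1), (A + B * (x - (a+1/2)) + C * (x - (a+1/2))^2 / 2)) = A + C/24 := by
  set m := a + 1/2 with hm
  have hd : ∀ x ∈ Set.uIcc a (a+1), HasDerivAt
      (fun y => A * y + B * (y - m)^2/2 + C * (y - m)^3/6)
      (A + B * (x - m) + C * (x - m)^2 / 2) x := by
    intro x _
    have l1 : HasDerivAt (fun z : ℝ => z - m) 1 x := (hasDerivAt_id x).sub_const m
    have := ((hasDerivAt_id x).const_mul A).add
      ((((l1.pow 2).const_mul B).div_const 2).add (((l1.pow 3).const_mul C).div_const 6))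
    refine (this.congr_deriv ?_).congr_of_eventuallyEq (Filter.Eventually.of_forall fun y => ?_)
    · push_cast; ring
    · show _ = A * y + (B * (y - m)^2 / 2 + C * (y - m)^3 / 6); ring
  have hint : IntervalIntegrable (fun x => A + B * (x - m) + C * (x - m)^2 / 2)
      MeasureTheory.volume a (a+1) := by
    apply Continuous.intervalIntegrable; continuity
  rw [intervalIntegral.integral_eq_sub_of_hasDerivAt hd hint]
  ring

lemma eta_bounds_gen {h h' h'' : ℝ → ℝ} {a : ℝ}
    (Dh : ∀ y ∈ Set.Icc a (a+1), HasDerivAt h (h' y) y)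
    (Dh' : ∀ y ∈ Set.Icc a (a+1), HasDerivAt h' (h'' y) y)
    (hbd : ∀ y ∈ Set.Icc a (a+1), h'' (a+1) ≤ h'' y ∧ h'' y ≤ h'' a) :
    h'' (a+1)/24 ≤ (∫ x in a..(a+1), h x) - h (a+1/2) ∧
      (∫ x in a..(a+1), h x) - h (a+1/2) ≤ h'' a / 24 := by
  have hm : a + 1/2 ∈ Set.Icc a (a+1) := by constructor <;> linarith
  have hcont : ContinuousOn h (Set.uIcc a (a+1)) := by
    rw [Set.uIcc_of_le (by linarith)]
    exact fun y hy => (Dh y hy).continuousAt.continuousWithinAt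
  have hih : IntervalIntegrable h MeasureTheory.volume a (a+1) :=
    hcont.intervalIntegrable
  have hiq : ∀ B C : ℝ, IntervalIntegrable
      (fun x => h (a+1/2) + B * (x - (a+1/2)) + C * (x - (a+1/2))^2 / 2)
      MeasureTheory.volume a (a+1) := by
    intro B C; apply Continuous.intervalIntegrable; continuity
  constructor
  · have hpt := quad_lower hm Dh Dh' (fun y hy => (hbd y hy).1)
    have : (∫ x in a..(a+1), (h (a+1/2) + h' (a+1/2) * (x - (a+1/2)) +
        h'' (a+1) * (x - (a+1/2))^2 / 2)) ≤ ∫ x in a..(a+1), h x := by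
      apply intervalIntegral.integral_mono_on (by linarith) (hiq _ _) hih
      exact fun x hx => hpt x hx
    rw [integral_quad] at this
    linarith
  · have hpt := quad_upper hm Dh Dh' (fun y hy => (hbd y hy).2)
    have : (∫ x in a..(a+1), h x) ≤ ∫ x in a..(a+1), (h (a+1/2) +
        h' (a+1/2) * (x - (a+1/2)) + h'' a * (x - (a+1/2))^2 / 2) := by
      apply intervalIntegral.integral_mono_on (by linarith) hih (hiq _ _)
      exact fun x hx => hpt x hx
    rw [integral_quad] at this
    linarith

lemma midpoint_le_integral_gen {h h' h'' : ℝ → ℝ} {a : ℝ}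
    (Dh : ∀ y ∈ Set.Icc a (a+1), HasDerivAt h (h' y) y)
    (Dh' : ∀ y ∈ Set.Icc a (a+1), HasDerivAt h' (h'' y) y)
    (hpos : ∀ y ∈ Set.Icc a (a+1), 0 ≤ h'' y) :
    h (a+1/2) ≤ ∫ x in a..(a+1), h x := by
  have hm : a + 1/2 ∈ Set.Icc a (a+1) := by constructor <;> linarith
  have hcont : ContinuousOn h (Set.uIcc a (a+1)) := by
    rw [Set.uIcc_of_le (by linarith)]
    exact fun y hy => (Dh y hy).continuousAt.continuousWithinAt
  have hpt := quad_lower hm Dh Dh' hpos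
  have : (∫ x in a..(a+1), (h (a+1/2) + h' (a+1/2) * (x - (a+1/2)) +
      0 * (x - (a+1/2))^2 / 2)) ≤ ∫ x in a..(a+1), h x := by
    apply intervalIntegral.integral_mono_on (by linarith)
      (by apply Continuous.intervalIntegrable; continuity) hcont.intervalIntegrable
    exact fun x hx => hpt x hx
  rw [integral_quad] at this
  linarith

lemma integral_le_of_antitone {h : ℝ → ℝ} {a : ℝ}
    (hcont : ContinuousOn h (Set.Icc a (a+1)))
    (hbd : ∀ y ∈ Set.Icc a (a+1), h y ≤ h a) :
    (∫ x in a..(a+1), h x) ≤ h a := by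
  have : (∫ x in a..(a+1), h x) ≤ ∫ _x in a..(a+1), h a := by
    apply intervalIntegral.integral_mono_on (by linarith)
      (by rw [← Set.uIcc_of_le (by linarith : a ≤ a+1)] at hcont
          exact hcont.intervalIntegrable)
      (by apply Continuous.intervalIntegrable; continuity)
    exact hbd
  simpa using this

lemma le_integral_of_antitone {h : ℝ → ℝ} {a : ℝ}
    (hcont : ContinuousOn h (Set.Icc a (a+1)))
    (hbd : ∀ y ∈ Set.Icc a (a+1), h (a+1) ≤ h y) :
    h (a+1) ≤ ∫ x in a..(a+1), h x := by
  have : (∫ _x in a..(a+1), h (a+1)) ≤ ∫ x in a..(a+1), h x := by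
    apply intervalIntegral.integral_mono_on (by linarith)
      (by apply Continuous.intervalIntegrable; continuity)
      (by rw [← Set.uIcc_of_le (by linarith : a ≤ a+1)] at hcont
          exact hcont.intervalIntegrable)
    exact hbd
  simpa using this

set_option maxHeartbeats 2000000

lemma log_ratio_bounds {y : ℝ} (h0 : 0 < y) (h4 : y ≤ 1/4) :
    2*y^3/3 ≤ Real.log (1+y) - Real.log (1-y) - 2*y ∧
      Real.log (1+y) - Real.log (1-y) - 2*y ≤ 2*y^3/(3*(1-y^2)) := by
  have hy1 : (0:ℝ) < 1 - y := by linarith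
  have habs : |y| < 1 := by rw [abs_of_pos h0]; linarith
  have habs' : |(-y)| < 1 := by rwa [abs_neg]
  have h1 := Real.abs_log_sub_add_sum_range_le habs 6
  have h2 := Real.abs_log_sub_add_sum_range_le habs' 6
  simp only [Finset.sum_range_succ, Finset.sum_range_zero] at h1 h2
  rw [abs_of_pos h0] at h1
  rw [abs_neg, abs_of_pos h0] at h2
  rw [abs_le] at h1 h2
  obtain ⟨h1l, h1r⟩ := h1
  obtain ⟨h2l, h2r⟩ := h2
  have hsub : (1:ℝ) - -y = 1 + y := by ring
  rw [hsub] at h2l h2r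
  norm_num at h1l h1r h2l h2r
  ring_nf at h1l h1r h2l h2r
  have k1 : y^7/(1-y) ≤ y^5/5 := by
    rw [div_le_div_iff₀ hy1 (by norm_num)]
    nlinarith [mul_nonneg (pow_nonneg h0.le 5) (show (0:ℝ) ≤ 1 - y - 5*y^2 by nlinarith)]
  have h2' : (0:ℝ) < 1 - y^2 := by nlinarith
  have k2 : y^5/5 + y^7/(1-y) ≤ y^5/(3*(1-y^2)) := by
    rw [div_add_div _ _ (by norm_num) hy1.ne', div_le_div_iff₀ (by positivity) (by positivity)]
    have b1 : y^2 ≤ y/4 := by nlinarith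
    have b2 : y^3 ≤ y/16 := by nlinarith
    have b4 : (0:ℝ) ≤ y^4 := by positivity
    nlinarith [mul_nonneg (pow_nonneg h0.le 5)
      (show (0:ℝ) ≤ 2 - 2*y - 12*y^2 - 3*y^3 + 15*y^4 by nlinarith)]
  have id1 : 2*y^3/(3*(1-y^2)) = 2*y^3/3 + 2*(y^5/(3*(1-y^2))) := by
    field_simp
    ring
  set l1 := Real.log (1+y); set l2 := Real.log (1-y)
  set r := y ^ 7 * (1 - y)⁻¹ with hr
  have k1' : r ≤ y^5/5 := by rw [hr, ← div_eq_mul_inv]; exact k1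
  have k2' : y^5/5 + r ≤ y^5/(3*(1-y^2)) := by rw [hr, ← div_eq_mul_inv]; exact k2
  constructor
  · linarith
  · linarith

lemma e_bound {m : ℝ} (hm : 2 ≤ m) :
    1/(24*m^2) - 1/(24*(m+1)^2) ≤ Real.log (m+1/2) - Real.log (m-1/2) - 1/m ∧
      Real.log (m+1/2) - Real.log (m-1/2) - 1/m ≤ 1/(24*(m-1/2)^2) - 1/(24*(m+1/2)^2) := by
  have hm0 : (0:ℝ) < m := by linarith
  obtain ⟨hl, hr⟩ := log_ratio_bounds (y := 1/(2*m)) (by positivity)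
    (by rw [div_le_div_iff₀ (by linarith) (by norm_num)]; linarith)
  have e1 : Real.log (m+1/2) = Real.log m + Real.log (1+1/(2*m)) := by
    rw [← Real.log_mul hm0.ne' (by positivity)]
    congr 1; field_simp
  have e2 : Real.log (m-1/2) = Real.log m + Real.log (1-1/(2*m)) := by
    have hy1 : (0:ℝ) < 1 - 1/(2*m) := by
      rw [sub_pos, div_lt_iff₀ (by linarith)]; linarith
    rw [← Real.log_mul hm0.ne' hy1.ne']
    congr 1; field_simp
  have key : Real.log (m+1/2) - Real.log (m-1/2) - 1/m
      = Real.log (1+1/(2*m)) - Real.log (1-1/(2*m)) - 2*(1/(2*m)) := by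
    rw [e1, e2]; field_simp; ring
  rw [key]
  have h2' : (0:ℝ) < 4*m^2 - 1 := by nlinarith
  constructor
  · refine le_trans ?_ hl
    have hv : 2*(1/(2*m))^3/3 = 1/(12*m^3) := by field_simp; ring
    rw [hv, div_sub_div _ _ (by positivity) (by positivity),
      div_le_div_iff₀ (by positivity) (by positivity)]
    nlinarith [sq_nonneg m, hm0, pow_pos hm0 3]
  · refine le_trans hr ?_
    have hy2 : (0:ℝ) < 1 - (1/(2*m))^2 := by
      have : (1/(2*m))^2 = 1/(4*m^2) := by ring
      rw [this]; rw [sub_pos, div_lt_iff₀ (by positivity)]; nlinarith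
    have hv : 2*(1/(2*m))^3/(3*(1-(1/(2*m))^2)) = 1/(3*m*(4*m^2-1)) := by
      rw [div_eq_div_iff (by nlinarith [hy2] : (0:ℝ) < 3*(1-(1/(2*m))^2)).ne' (by positivity : (0:ℝ) < 3*m*(4*m^2-1)).ne']
      field_simp; ring
    have p1 : (0:ℝ) < 24*(m-1/2)^2 := by nlinarith
    have p2 : (0:ℝ) < 24*(m+1/2)^2 := by nlinarith
    rw [hv, div_sub_div _ _ p1.ne' p2.ne',
      div_le_div_iff₀ (by positivity) (mul_pos p1 p2)]
    nlinarith [sq_nonneg m, hm0, h2', pow_pos hm0 3, pow_pos hm0 4]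

noncomputable def dseq (k : ℕ) : ℝ :=
  (harmonic k : ℝ) - Real.eulerMascheroniConstant - Real.log ((k:ℝ) + 1/2)

lemma dseq_sub_succ (k : ℕ) :
    dseq k - dseq (k+1)
      = Real.log (((k:ℝ)+1) + 1/2) - Real.log (((k:ℝ)+1) - 1/2) - 1/((k:ℝ)+1) := by
  have e : ((k:ℝ)+1) - 1/2 = (k:ℝ) + 1/2 := by ring
  unfold dseq
  rw [harmonic_succ, e]
  push_cast
  ring

lemma dseq_tendsto : Filter.Tendsto dseq Filter.atTop (𝓝 0) := by
  have h1 : Filter.Tendsto (fun k : ℕ => Real.eulerMascheroniSeq k - Real.eulerMascheroniConstant)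
      Filter.atTop (𝓝 0) := by
    simpa using Real.tendsto_eulerMascheroniSeq.sub_const Real.eulerMascheroniConstant
  have h2 : Filter.Tendsto (fun k : ℕ => Real.log ((k:ℝ)+1) - Real.log ((k:ℝ)+1/2))
      Filter.atTop (𝓝 0) := by
    apply squeeze_zero' (g := fun k : ℕ => 1/(k:ℝ))
    · filter_upwards [Filter.eventually_ge_atTop 1] with k hk
      have : (0:ℝ) < (k:ℝ) + 1/2 := by positivity
      have := Real.log_le_log (by positivity) (show (k:ℝ)+1/2 ≤ (k:ℝ)+1 by linarith)
      linarith
    · filter_upwards [Filter.eventually_ge_atTop 1] with k hk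
      have hk1 : (1:ℝ) ≤ (k:ℝ) := by exact_mod_cast hk
      have hpos : (0:ℝ) < (k:ℝ)+1/2 := by positivity
      have hlog := Real.log_le_sub_one_of_pos (show (0:ℝ) < ((k:ℝ)+1)/((k:ℝ)+1/2) by positivity)
      rw [Real.log_div (by positivity) hpos.ne'] at hlog
      have : ((k:ℝ)+1)/((k:ℝ)+1/2) - 1 = (1/2)/((k:ℝ)+1/2) := by field_simp; ring
      rw [this] at hlog
      have : (1/2)/((k:ℝ)+1/2) ≤ 1/(k:ℝ) := by
        rw [div_le_div_iff₀ hpos (by linarith)]; linarith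
      linarith
    · exact tendsto_one_div_atTop_nhds_zero_nat
  have := h1.add h2
  rw [add_zero] at this
  apply this.congr
  intro k
  simp only [Real.eulerMascheroniSeq, dseq]
  push_cast
  ring

lemma tel_gen (F : ℕ → ℝ) (k : ℕ) : ∀ M, (∑ j ∈ Finset.range M, (F (k+j) - F (k+j+1)))
    = F k - F (k+M) := by
  intro M
  induction M with
  | zero => simp
  | succ M ih =>
    rw [Finset.sum_range_succ, ih]
    have e : k + (M+1) = k + M + 1 := by omega
    rw [e]; ring

lemma aux_tendsto_sq (c : ℝ) (hc : 0 ≤ c) :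
    Filter.Tendsto (fun M : ℕ => 1/(24*((M:ℝ)+c)^2)) Filter.atTop (𝓝 0) := by
  apply squeeze_zero' (g := fun M : ℕ => 1/(M:ℝ))
  · filter_upwards with M; positivity
  · filter_upwards [Filter.eventually_ge_atTop 1] with M hM
    have hM1 : (1:ℝ) ≤ (M:ℝ) := by exact_mod_cast hM
    rw [div_le_div_iff₀ (by positivity) (by linarith)]
    nlinarith
  · exact tendsto_one_div_atTop_nhds_zero_nat

lemma dseq_bounds (k : ℕ) (hk : 1 ≤ k) :
    1/(24*((k:ℝ)+1)^2) ≤ dseq k ∧ dseq k ≤ 1/(24*((k:ℝ)+1/2)^2) := by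
  have hterm : ∀ j : ℕ, k ≤ j →
      (1/(24*((j:ℝ)+1)^2) - 1/(24*((j:ℝ)+1+1)^2) ≤ dseq j - dseq (j+1) ∧
        dseq j - dseq (j+1) ≤ 1/(24*((j:ℝ)+1/2)^2) - 1/(24*((j:ℝ)+1+1/2)^2)) := by
    intro j hj
    have hj1 : (1:ℝ) ≤ (j:ℝ) := by exact_mod_cast le_trans hk hj
    have hm : (2:ℝ) ≤ (j:ℝ)+1 := by linarith
    obtain ⟨hl, hr⟩ := e_bound hm
    rw [dseq_sub_succ]
    constructor
    · refine le_trans (le_of_eq ?_) hl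
      congr 1 <;> congr 1 <;> ring
    · refine le_trans hr (le_of_eq ?_)
      congr 1 <;> congr 1 <;> ring
  -- partial sums
  have tel : ∀ M, dseq k - dseq (k+M) = ∑ j ∈ Finset.range M, (dseq (k+j) - dseq (k+j+1)) :=
    fun M => (tel_gen dseq k M).symm
  constructor
  · -- lower bound
    set G : ℕ → ℝ := fun j => 1/(24*((j:ℝ)+1)^2) with hG
    have hsum : ∀ M, G k - G (k+M) + dseq (k+M) ≤ dseq k := by
      intro M
      have h1 : G k - G (k+M) ≤ dseq k - dseq (k+M) := by
        rw [tel M, ← tel_gen G k M]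
        apply Finset.sum_le_sum
        intro j hj
        have := (hterm (k+j) (Nat.le_add_right k j)).1
        have e1 : G (k+j) = 1/(24*(((k+j:ℕ):ℝ)+1)^2) := rfl
        have e2 : G (k+j+1) = 1/(24*(((k+j:ℕ):ℝ)+1+1)^2) := by
          simp only [hG]; push_cast; ring_nf
        rw [e1, e2]; exact this
      linarith
    have hlim : Filter.Tendsto (fun M => G k - G (k+M) + dseq (k+M)) Filter.atTop (𝓝 (G k)) := by
      have t1 : Filter.Tendsto (fun M : ℕ => G (k+M)) Filter.atTop (𝓝 0) := by
        have := (aux_tendsto_sq ((k:ℝ)+1) (by positivity))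
        apply this.congr
        intro M; simp only [hG]; push_cast; ring_nf
      have t2 : Filter.Tendsto (fun M : ℕ => dseq (k+M)) Filter.atTop (𝓝 0) := by
        exact (dseq_tendsto.comp (tendsto_add_atTop_nat k)).congr
          (fun M => congrArg dseq (Nat.add_comm M k))
      have := (((tendsto_const_nhds (x := G k)).sub t1).add t2)
      simpa using this
    exact le_of_tendsto hlim (Filter.Eventually.of_forall hsum)
  · set G : ℕ → ℝ := fun j => 1/(24*((j:ℝ)+1/2)^2) with hG
    have hsum : ∀ M, dseq k ≤ G k - G (k+M) + dseq (k+M) := by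
      intro M
      have h1 : dseq k - dseq (k+M) ≤ G k - G (k+M) := by
        rw [tel M, ← tel_gen G k M]
        apply Finset.sum_le_sum
        intro j hj
        have := (hterm (k+j) (Nat.le_add_right k j)).2
        have e1 : G (k+j) = 1/(24*(((k+j:ℕ):ℝ)+1/2)^2) := rfl
        have e2 : G (k+j+1) = 1/(24*(((k+j:ℕ):ℝ)+1+1/2)^2) := by
          simp only [hG]; push_cast; ring_nf
        rw [e1, e2]; exact this
      linarith
    have hlim : Filter.Tendsto (fun M => G k - G (k+M) + dseq (k+M)) Filter.atTop (𝓝 (G k)) := by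
      have t1 : Filter.Tendsto (fun M : ℕ => G (k+M)) Filter.atTop (𝓝 0) := by
        have := (aux_tendsto_sq ((k:ℝ)+1/2) (by positivity))
        apply this.congr
        intro M; simp only [hG]; push_cast; ring_nf
      have t2 : Filter.Tendsto (fun M : ℕ => dseq (k+M)) Filter.atTop (𝓝 0) := by
        exact (dseq_tendsto.comp (tendsto_add_atTop_nat k)).congr
          (fun M => congrArg dseq (Nat.add_comm M k))
      have := (((tendsto_const_nhds (x := G k)).sub t1).add t2)
      simpa using this
    exact ge_of_tendsto hlim (Filter.Eventually.of_forall hsum)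

section specific

variable {t c : ℝ}

lemma xpos (hc1 : 1 ≤ c) {x : ℝ} (hx : c ≤ x) : 0 < x := by linarith

lemma upos (hc1 : 1 ≤ c) (hc2 : 0 < t + Real.log c) {x : ℝ} (hx : c ≤ x) :
    0 < t + Real.log x := by
  have := Real.log_le_log (by linarith : (0:ℝ) < c) hx
  linarith

lemma eta_bounds_spec (hc1 : 1 ≤ c) (hc2 : 0 < t + Real.log c) {a : ℝ} (ha : c ≤ a) :
    (qq t 2 2 (a+1) + 2*qq t 2 3 (a+1))/24 ≤ (∫ x in a..(a+1), qq t 0 1 x) - qq t 0 1 (a+1/2) ∧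
      (∫ x in a..(a+1), qq t 0 1 x) - qq t 0 1 (a+1/2) ≤ (qq t 2 2 a + 2*qq t 2 3 a)/24 := by
  have hmem : ∀ y ∈ Set.Icc a (a+1), 0 < y ∧ 0 < t + Real.log y := fun y hy =>
    ⟨xpos hc1 (le_trans ha hy.1), upos hc1 hc2 (le_trans ha hy.1)⟩
  have Dh : ∀ y ∈ Set.Icc a (a+1), HasDerivAt (qq t 0 1) (-(qq t 1 2 y)) y := fun y hy =>
    hdA (hmem y hy).1 (hmem y hy).2.ne'
  have Dh' : ∀ y ∈ Set.Icc a (a+1), HasDerivAt (fun z => -(qq t 1 2 z))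
      (qq t 2 2 y + 2 * qq t 2 3 y) y := fun y hy => hdB (hmem y hy).1 (hmem y hy).2.ne'
  have anti : AntitoneOn (fun y => qq t 2 2 y + 2 * qq t 2 3 y) (Set.Icc a (a+1)) := by
    apply antitoneOn_of_deriv_nonpos (convex_Icc _ _)
    · exact fun y hy => (hdC (hmem y hy).1 (hmem y hy).2.ne').continuousAt.continuousWithinAt
    · intro y hy
      rw [interior_Icc] at hy
      have hy' := Set.Ioo_subset_Icc_self hy
      exact (hdC (hmem y hy').1 (hmem y hy').2.ne').differentiableAt.differentiableWithinAt
    · intro y hy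
      rw [interior_Icc] at hy
      have hy' := Set.Ioo_subset_Icc_self hy
      rw [(hdC (hmem y hy').1 (hmem y hy').2.ne').deriv]
      have p1 := qq_pos 3 2 (hmem y hy').1 (hmem y hy').2
      have p2 := qq_pos 3 3 (hmem y hy').1 (hmem y hy').2
      have p3 := qq_pos 3 4 (hmem y hy').1 (hmem y hy').2
      linarith
  have hend1 : (a+1) ∈ Set.Icc a (a+1) := ⟨by linarith, le_refl _⟩
  have hend0 : a ∈ Set.Icc a (a+1) := ⟨le_refl _, by linarith⟩
  exact eta_bounds_gen Dh Dh' (fun y hy => ⟨anti hy hend1 hy.2, anti hend0 hy hy.1⟩)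

lemma midF2_spec (hc1 : 1 ≤ c) (hc2 : 0 < t + Real.log c) {a : ℝ} (ha : c ≤ a) :
    qq t 2 2 (a+1/2) + 2*qq t 2 3 (a+1/2)
      ≤ ∫ x in a..(a+1), (qq t 2 2 x + 2*qq t 2 3 x) := by
  have hmem : ∀ y ∈ Set.Icc a (a+1), 0 < y ∧ 0 < t + Real.log y := fun y hy =>
    ⟨xpos hc1 (le_trans ha hy.1), upos hc1 hc2 (le_trans ha hy.1)⟩
  refine midpoint_le_integral_gen
    (h := fun y => qq t 2 2 y + 2 * qq t 2 3 y)
    (h' := fun y => -(2 * qq t 3 2 y + (6 * qq t 3 3 y + 6 * qq t 3 4 y)))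
    (h'' := fun y => 6 * qq t 4 2 y + 22 * qq t 4 3 y + 36 * qq t 4 4 y + 24 * qq t 4 5 y)
    ?_ ?_ ?_
  · exact fun y hy => hdC (hmem y hy).1 (hmem y hy).2.ne'
  · exact fun y hy => hdD (hmem y hy).1 (hmem y hy).2.ne'
  · intro y hy
    have p1 := qq_pos 4 2 (hmem y hy).1 (hmem y hy).2
    have p2 := qq_pos 4 3 (hmem y hy).1 (hmem y hy).2
    have p3 := qq_pos 4 4 (hmem y hy).1 (hmem y hy).2
    have p4 := qq_pos 4 5 (hmem y hy).1 (hmem y hy).2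
    linarith

lemma midG_spec (hc1 : 1 ≤ c) (hc2 : 0 < t + Real.log c) {a : ℝ} (ha : c ≤ a) :
    qq t 2 2 (a+1/2) ≤ ∫ x in a..(a+1), qq t 2 2 x := by
  have hmem : ∀ y ∈ Set.Icc a (a+1), 0 < y ∧ 0 < t + Real.log y := fun y hy =>
    ⟨xpos hc1 (le_trans ha hy.1), upos hc1 hc2 (le_trans ha hy.1)⟩
  refine midpoint_le_integral_gen
    (h := qq t 2 2)
    (h' := fun y => -(2 * qq t 3 2 y + 2 * qq t 3 3 y))
    (h'' := fun y => 6 * qq t 4 2 y + 10 * qq t 4 3 y + 6 * qq t 4 4 y)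
    ?_ ?_ ?_
  · exact fun y hy => hdG (hmem y hy).1 (hmem y hy).2.ne'
  · exact fun y hy => hdG' (hmem y hy).1 (hmem y hy).2.ne'
  · intro y hy
    have p1 := qq_pos 4 2 (hmem y hy).1 (hmem y hy).2
    have p2 := qq_pos 4 3 (hmem y hy).1 (hmem y hy).2
    have p3 := qq_pos 4 4 (hmem y hy).1 (hmem y hy).2
    linarith

lemma antiF2_spec (hc1 : 1 ≤ c) (hc2 : 0 < t + Real.log c) {a b : ℝ} (ha : c ≤ a) (hab : a ≤ b) :
    AntitoneOn (fun y => qq t 2 2 y + 2 * qq t 2 3 y) (Set.Icc a b) := by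
  have hmem : ∀ y ∈ Set.Icc a b, 0 < y ∧ 0 < t + Real.log y := fun y hy =>
    ⟨xpos hc1 (le_trans ha hy.1), upos hc1 hc2 (le_trans ha hy.1)⟩
  apply antitoneOn_of_deriv_nonpos (convex_Icc _ _)
  · exact fun y hy => (hdC (hmem y hy).1 (hmem y hy).2.ne').continuousAt.continuousWithinAt
  · intro y hy
    rw [interior_Icc] at hy
    have hy' := Set.Ioo_subset_Icc_self hy
    exact (hdC (hmem y hy').1 (hmem y hy').2.ne').differentiableAt.differentiableWithinAt
  · intro y hy
    rw [interior_Icc] at hy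
    have hy' := Set.Ioo_subset_Icc_self hy
    rw [(hdC (hmem y hy').1 (hmem y hy').2.ne').deriv]
    have p1 := qq_pos 3 2 (hmem y hy').1 (hmem y hy').2
    have p2 := qq_pos 3 3 (hmem y hy').1 (hmem y hy').2
    have p3 := qq_pos 3 4 (hmem y hy').1 (hmem y hy').2
    linarith

lemma antiG_spec (hc1 : 1 ≤ c) (hc2 : 0 < t + Real.log c) {a b : ℝ} (ha : c ≤ a) (hab : a ≤ b) :
    AntitoneOn (qq t 2 2) (Set.Icc a b) := by
  have hmem : ∀ y ∈ Set.Icc a b, 0 < y ∧ 0 < t + Real.log y := fun y hy =>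
    ⟨xpos hc1 (le_trans ha hy.1), upos hc1 hc2 (le_trans ha hy.1)⟩
  apply antitoneOn_of_deriv_nonpos (convex_Icc _ _)
  · exact fun y hy => (hdG (hmem y hy).1 (hmem y hy).2.ne').continuousAt.continuousWithinAt
  · intro y hy
    rw [interior_Icc] at hy
    have hy' := Set.Ioo_subset_Icc_self hy
    exact (hdG (hmem y hy').1 (hmem y hy').2.ne').differentiableAt.differentiableWithinAt
  · intro y hy
    rw [interior_Icc] at hy
    have hy' := Set.Ioo_subset_Icc_self hy
    rw [(hdG (hmem y hy').1 (hmem y hy').2.ne').deriv]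
    have p1 := qq_pos 3 2 (hmem y hy').1 (hmem y hy').2
    have p2 := qq_pos 3 3 (hmem y hy').1 (hmem y hy').2
    linarith

lemma intF2_le_spec (hc1 : 1 ≤ c) (hc2 : 0 < t + Real.log c) {a : ℝ} (ha : c ≤ a) :
    (∫ x in a..(a+1), (qq t 2 2 x + 2*qq t 2 3 x)) ≤ qq t 2 2 a + 2*qq t 2 3 a := by
  have anti := antiF2_spec hc1 hc2 ha (by linarith : a ≤ a+1)
  apply integral_le_of_antitone
  · exact fun y hy => ((hdC (xpos hc1 (le_trans ha hy.1))
      (upos hc1 hc2 (le_trans ha hy.1)).ne').continuousAt).continuousWithinAt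
  · exact fun y hy => anti ⟨le_refl _, by linarith⟩ hy hy.1

lemma intG_le_spec (hc1 : 1 ≤ c) (hc2 : 0 < t + Real.log c) {a : ℝ} (ha : c ≤ a) :
    (∫ x in a..(a+1), qq t 2 2 x) ≤ qq t 2 2 a := by
  have anti := antiG_spec hc1 hc2 ha (by linarith : a ≤ a+1)
  apply integral_le_of_antitone
  · exact fun y hy => ((hdG (xpos hc1 (le_trans ha hy.1))
      (upos hc1 hc2 (le_trans ha hy.1)).ne').continuousAt).continuousWithinAt
  · exact fun y hy => anti ⟨le_refl _, by linarith⟩ hy hy.1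

lemma ftcF2_spec (hc1 : 1 ≤ c) (hc2 : 0 < t + Real.log c) {a b : ℝ} (ha : c ≤ a) (hab : a ≤ b) :
    (∫ x in a..b, (qq t 2 2 x + 2*qq t 2 3 x)) = qq t 1 2 a - qq t 1 2 b := by
  have hmem : ∀ y ∈ Set.uIcc a b, 0 < y ∧ 0 < t + Real.log y := by
    rw [Set.uIcc_of_le hab]
    exact fun y hy => ⟨xpos hc1 (le_trans ha hy.1), upos hc1 hc2 (le_trans ha hy.1)⟩
  have := intervalIntegral.integral_eq_sub_of_hasDerivAt
    (f := fun y => -(qq t 1 2 y))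
    (f' := fun y => qq t 2 2 y + 2*qq t 2 3 y)
    (fun y hy => hdB (hmem y hy).1 (hmem y hy).2.ne')
    (ContinuousOn.intervalIntegrable
      (fun y hy => (hdC (hmem y hy).1 (hmem y hy).2.ne').continuousAt.continuousWithinAt))
  rw [this]; ring

lemma integrableG_spec (hc1 : 1 ≤ c) (hc2 : 0 < t + Real.log c) {a : ℝ} (ha : c ≤ a) :
    MeasureTheory.IntegrableOn (qq t 2 2) (Set.Ioi a) MeasureTheory.volume := by
  have ha0 : 0 < a := by linarith
  have hmem : ∀ y ∈ Set.Ioi a, 0 < y ∧ 0 < t + Real.log y := fun y hy =>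
    ⟨xpos hc1 (le_trans ha (le_of_lt hy)), upos hc1 hc2 (le_trans ha (le_of_lt hy))⟩
  have hbound : MeasureTheory.IntegrableOn
      (fun x : ℝ => (1/(t + Real.log a)^2) * x^(-2:ℝ)) (Set.Ioi a) MeasureTheory.volume :=
    (integrableOn_Ioi_rpow_of_lt (by norm_num) ha0).const_mul _
  apply MeasureTheory.Integrable.mono' hbound
  · exact ContinuousOn.aestronglyMeasurable
      (fun y hy => (hdG (hmem y hy).1 (hmem y hy).2.ne').continuousAt.continuousWithinAt)
      measurableSet_Ioi
  · rw [MeasureTheory.ae_restrict_iff' measurableSet_Ioi]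
    apply Filter.Eventually.of_forall
    intro x hx
    obtain ⟨hx0, hux⟩ := hmem x hx
    have hua := upos hc1 hc2 ha
    have hual : t + Real.log a ≤ t + Real.log x := by
      have := Real.log_le_log ha0 (le_of_lt hx); linarith
    rw [Real.norm_eq_abs, abs_of_nonneg (qq_pos 2 2 hx0 hux).le]
    rw [show (-2:ℝ) = -((2:ℕ):ℝ) by norm_num, Real.rpow_neg hx0.le, Real.rpow_natCast]
    have h1 : x^2*(t + Real.log a)^2 ≤ x^2*(t + Real.log x)^2 := by
      apply mul_le_mul_of_nonneg_left _ (by positivity)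
      apply pow_le_pow_left₀ hua.le hual
    have h2 : qq t 2 2 x ≤ 1/(x^2*(t + Real.log a)^2) := by
      unfold qq
      apply one_div_le_one_div_of_le (by positivity) h1
    calc qq t 2 2 x ≤ 1/(x^2*(t + Real.log a)^2) := h2
      _ = (1/(t + Real.log a)^2) * (x^2)⁻¹ := by
            rw [one_div, one_div, mul_inv, mul_comm]

lemma intG_le_Ioi_spec (hc1 : 1 ≤ c) (hc2 : 0 < t + Real.log c) {a b : ℝ} (ha : c ≤ a)
    (hab : a ≤ b) :
    (∫ x in a..b, qq t 2 2 x) ≤ ∫ x in Set.Ioi a, qq t 2 2 x := by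
  rw [intervalIntegral.integral_of_le hab]
  apply MeasureTheory.setIntegral_mono_set (integrableG_spec hc1 hc2 ha)
  · apply Filter.Eventually.of_forall
    intro x
    unfold qq; positivity
  · exact (Set.Ioc_subset_Ioi_self).eventuallyLE

end specific

section sums

variable {t c : ℝ}

lemma hfi_spec (hc1 : 1 ≤ c) (hc2 : 0 < t + Real.log c) {a b : ℝ} (ha : c ≤ a) (hab : a ≤ b) :
    IntervalIntegrable (qq t 0 1) MeasureTheory.volume a b := by
  apply ContinuousOn.intervalIntegrable
  rw [Set.uIcc_of_le hab]
  exact fun y hy => (hdA (xpos hc1 (le_trans ha hy.1))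
    (upos hc1 hc2 (le_trans ha hy.1)).ne').continuousAt.continuousWithinAt

lemma hGi_spec (hc1 : 1 ≤ c) (hc2 : 0 < t + Real.log c) {a b : ℝ} (ha : c ≤ a) (hab : a ≤ b) :
    IntervalIntegrable (qq t 2 2) MeasureTheory.volume a b := by
  apply ContinuousOn.intervalIntegrable
  rw [Set.uIcc_of_le hab]
  exact fun y hy => (hdG (xpos hc1 (le_trans ha hy.1))
    (upos hc1 hc2 (le_trans ha hy.1)).ne').continuousAt.continuousWithinAt

/-- U1 -/
lemma sumF2_le (hc1 : 1 ≤ c) (hc2 : 0 < t + Real.log c) (n : ℕ) (hcn : c ≤ (n:ℝ)) :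
    ∀ m : ℕ, n+1 ≤ m → ∑ k ∈ Finset.Ico (n+1) m, (qq t 2 2 (k:ℝ) + 2*qq t 2 3 (k:ℝ))
      ≤ qq t 1 2 ((n:ℝ)+1/2) - qq t 1 2 ((m:ℝ)-1/2) := by
  intro m hm
  induction m, hm using Nat.le_induction with
  | base =>
    have e : ((n:ℝ)+1)-1/2 = (n:ℝ)+1/2 := by ring
    push_cast
    rw [e]
    simp
  | succ m hm ih =>
    rw [Finset.sum_Ico_succ_top (by omega : n+1 ≤ m)]
    have hmc : c ≤ (m:ℝ)-1/2 := by
      have : ((n:ℝ)+1) ≤ (m:ℝ) := by exact_mod_cast hm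
      linarith
    have hmid := midF2_spec hc1 hc2 (a := (m:ℝ)-1/2) hmc
    have e1 : (m:ℝ)-1/2+1/2 = (m:ℝ) := by ring
    have e2 : (m:ℝ)-1/2+1 = (m:ℝ)+1/2 := by ring
    rw [e1, e2] at hmid
    have hftc := ftcF2_spec hc1 hc2 (a := (m:ℝ)-1/2) (b := (m:ℝ)+1/2) hmc (by linarith)
    have e3 : (∫ x in ((m:ℝ)-1/2)..((m:ℝ)+1/2), (qq t 2 2 x + 2*qq t 2 3 x))
        = qq t 1 2 ((m:ℝ)-1/2) - qq t 1 2 ((m:ℝ)+1/2) := hftc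
    rw [e3] at hmid
    have e5 : ((m:ℕ)+1 : ℕ) = m+1 := rfl
    push_cast
    have e6 : (m:ℝ)+1-1/2 = (m:ℝ)+1/2 := by ring
    rw [e6]
    linarith

/-- U2 -/
lemma sumGmid_le (hc1 : 1 ≤ c) (hc2 : 0 < t + Real.log c) (n : ℕ) (hcn : c ≤ (n:ℝ)) :
    ∀ m : ℕ, n ≤ m → ∑ k ∈ Finset.Ico n m, qq t 2 2 ((k:ℝ)+1/2)
      ≤ ∫ x in (n:ℝ)..(m:ℝ), qq t 2 2 x := by
  intro m hm
  induction m, hm using Nat.le_induction with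
  | base => simp
  | succ m hm ih =>
    rw [Finset.sum_Ico_succ_top (by omega : n ≤ m)]
    have hmc : c ≤ (m:ℝ) := le_trans hcn (by exact_mod_cast hm)
    have hmid := midG_spec hc1 hc2 (a := (m:ℝ)) hmc
    have hadj := intervalIntegral.integral_add_adjacent_intervals
      (hGi_spec hc1 hc2 hcn (by exact_mod_cast hm : (n:ℝ) ≤ (m:ℝ)))
      (hGi_spec hc1 hc2 hmc (by linarith : (m:ℝ) ≤ (m:ℝ)+1)) (f := qq t 2 2)
    push_cast
    linarith

/-- D1 -/
lemma le_sumF2succ (hc1 : 1 ≤ c) (hc2 : 0 < t + Real.log c) (n : ℕ) (hcn : c ≤ (n:ℝ)) :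
    ∀ m : ℕ, n ≤ m → qq t 1 2 ((n:ℝ)+1) - qq t 1 2 ((m:ℝ)+1)
      ≤ ∑ k ∈ Finset.Ico n m, (qq t 2 2 ((k:ℝ)+1) + 2*qq t 2 3 ((k:ℝ)+1)) := by
  intro m hm
  induction m, hm using Nat.le_induction with
  | base => simp
  | succ m hm ih =>
    rw [Finset.sum_Ico_succ_top (by omega : n ≤ m)]
    have hmc : c ≤ (m:ℝ)+1 := by
      have : (n:ℝ) ≤ (m:ℝ) := by exact_mod_cast hm
      linarith
    have hint := intF2_le_spec hc1 hc2 (a := (m:ℝ)+1) hmc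
    have hftc := ftcF2_spec hc1 hc2 (a := (m:ℝ)+1) (b := (m:ℝ)+1+1) hmc (by linarith)
    have e3 : (∫ x in ((m:ℝ)+1)..((m:ℝ)+1+1), (qq t 2 2 x + 2*qq t 2 3 x))
        = qq t 1 2 ((m:ℝ)+1) - qq t 1 2 ((m:ℝ)+1+1) := hftc
    rw [e3] at hint
    push_cast
    linarith

/-- D2 -/
lemma le_sumGsucc (hc1 : 1 ≤ c) (hc2 : 0 < t + Real.log c) (n : ℕ) (hcn : c ≤ (n:ℝ)) :
    ∀ m : ℕ, n ≤ m → (∫ x in ((n:ℝ)+1)..((m:ℝ)+1), qq t 2 2 x)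
      ≤ ∑ k ∈ Finset.Ico n m, qq t 2 2 ((k:ℝ)+1) := by
  intro m hm
  induction m, hm using Nat.le_induction with
  | base => simp
  | succ m hm ih =>
    rw [Finset.sum_Ico_succ_top (by omega : n ≤ m)]
    have hmc : c ≤ (m:ℝ)+1 := by
      have : (n:ℝ) ≤ (m:ℝ) := by exact_mod_cast hm
      linarith
    have hint := intG_le_spec hc1 hc2 (a := (m:ℝ)+1) hmc
    have hadj := intervalIntegral.integral_add_adjacent_intervals
      (hGi_spec hc1 hc2 (by linarith : c ≤ (n:ℝ)+1)
        (by
          have h9 : (n:ℝ) ≤ (m:ℝ) := by exact_mod_cast hm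
          linarith))
      (hGi_spec hc1 hc2 hmc (by linarith : (m:ℝ)+1 ≤ (m:ℝ)+1+1)) (f := qq t 2 2)
    push_cast
    linarith

end sums

section delta

variable {t c : ℝ}

lemma delta_bounds_spec (hc1 : 1 ≤ c) (hc2 : 0 < t + Real.log c) (k : ℕ) (hk : 1 ≤ k)
    (hck : c ≤ (k:ℝ)) :
    qq t 2 2 ((k:ℝ)+1)/24
        ≤ qq t 0 1 ((k:ℝ)+1/2) - 1/((harmonic k : ℝ) - Real.eulerMascheroniConstant + t) ∧
      qq t 0 1 ((k:ℝ)+1/2) - 1/((harmonic k : ℝ) - Real.eulerMascheroniConstant + t)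
        ≤ qq t 2 2 ((k:ℝ)+1/2)/24 := by
  obtain ⟨hd1, hd2⟩ := dseq_bounds k hk
  have hk1 : (1:ℝ) ≤ (k:ℝ) := by exact_mod_cast hk
  have hu2 : 0 < t + Real.log ((k:ℝ)+1/2) := upos hc1 hc2 (by linarith)
  have hu1 : 0 < t + Real.log ((k:ℝ)+1) := upos hc1 hc2 (by linarith)
  have hdpos : 0 < dseq k := lt_of_lt_of_le (by positivity) hd1
  have hH : (harmonic k : ℝ) - Real.eulerMascheroniConstant + t
      = (t + Real.log ((k:ℝ)+1/2)) + dseq k := by unfold dseq; ring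
  have hq01 : qq t 0 1 ((k:ℝ)+1/2) = 1/(t + Real.log ((k:ℝ)+1/2)) := by simp [qq]
  have hsum : 0 < (t + Real.log ((k:ℝ)+1/2)) + dseq k := by linarith
  have eqd : 1/(t + Real.log ((k:ℝ)+1/2)) - 1/((t + Real.log ((k:ℝ)+1/2)) + dseq k)
      = dseq k/((t + Real.log ((k:ℝ)+1/2))*((t + Real.log ((k:ℝ)+1/2)) + dseq k)) := by
    rw [div_sub_div _ _ hu2.ne' hsum.ne']
    congr 1
    ring
  have hule : t + Real.log ((k:ℝ)+1/2) ≤ t + Real.log ((k:ℝ)+1) := by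
    have := Real.log_le_log (by positivity : (0:ℝ) < (k:ℝ)+1/2)
      (by linarith : (k:ℝ)+1/2 ≤ (k:ℝ)+1)
    linarith
  have hlog : 1/(24*((k:ℝ)+1/2)^2)
      ≤ (t + Real.log ((k:ℝ)+1)) - (t + Real.log ((k:ℝ)+1/2)) := by
    have hpos1 : (0:ℝ) < (k:ℝ)+1/2 := by positivity
    have hpos2 : (0:ℝ) < (k:ℝ)+1 := by positivity
    have hlsub := Real.log_le_sub_one_of_pos (show (0:ℝ) < ((k:ℝ)+1/2)/((k:ℝ)+1) by positivity)
    rw [Real.log_div hpos1.ne' hpos2.ne'] at hlsub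
    have e1 : ((k:ℝ)+1/2)/((k:ℝ)+1) - 1 = -((1/2)/((k:ℝ)+1)) := by
      field_simp
      ring
    rw [e1] at hlsub
    have e2 : 1/(24*((k:ℝ)+1/2)^2) ≤ (1/2)/((k:ℝ)+1) := by
      rw [div_le_div_iff₀ (by positivity) hpos2]
      nlinarith
    linarith
  have hdle : dseq k ≤ (t + Real.log ((k:ℝ)+1)) - (t + Real.log ((k:ℝ)+1/2)) :=
    le_trans hd2 hlog
  rw [hq01, hH, eqd]
  constructor
  · have step0 : qq t 2 2 ((k:ℝ)+1)/24
        = (1/(24*((k:ℝ)+1)^2))/((t + Real.log ((k:ℝ)+1))*(t + Real.log ((k:ℝ)+1))) := by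
      unfold qq
      rw [div_div, div_div]
      congr 1
      ring
    rw [step0]
    refine le_trans (div_le_div_of_nonneg_right hd1 (mul_pos hu1 hu1).le) ?_
    exact div_le_div_of_nonneg_left hdpos.le (mul_pos hu2 hsum) (by nlinarith)
  · have step0 : qq t 2 2 ((k:ℝ)+1/2)/24
        = (1/(24*((k:ℝ)+1/2)^2))/((t + Real.log ((k:ℝ)+1/2))*(t + Real.log ((k:ℝ)+1/2))) := by
      unfold qq
      rw [div_div, div_div]
      congr 1
      ring
    rw [step0]
    refine le_trans ?_ (div_le_div_of_nonneg_right hd2 (mul_pos hu2 hu2).le)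
    exact div_le_div_of_nonneg_left hdpos.le (mul_pos hu2 hu2) (by nlinarith)

end delta

/-- The sequence `θ_n(t,N) = ∫_N^n dx/(t+log x) - Σ_{k=N}^{n-1} 1/(H_k - γ + t)`. -/
noncomputable def thetaSeq (N : ℕ) (t : ℝ) (n : ℕ) : ℝ :=
  (∫ x in (N : ℝ)..(n : ℝ), 1 / (t + Real.log x)) -
    ∑ k ∈ Finset.Ico N n, 1 / ((harmonic k : ℝ) - Real.eulerMascheroniConstant + t)

theorem stmt_14 (N : ℕ) (hN : 0 < N) (t : ℝ) (ht : -Real.log N < t)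
    (L : ℝ) (hL : Filter.Tendsto (thetaSeq N t) Filter.atTop (𝓝 L)) :
    ∀ n : ℕ, N ≤ n →
      (∫ x in Set.Ioi ((n : ℝ) + 1), 1 / (24 * x^2 * (t + Real.log x)^2)) +
          1 / (24 * ((n : ℝ) + 1) * (t + Real.log ((n : ℝ) + 1))^2) ≤
        L - thetaSeq N t n ∧
      L - thetaSeq N t n ≤
        (∫ x in Set.Ioi (n : ℝ), 1 / (24 * x^2 * (t + Real.log x)^2)) +
          1 / (24 * ((n : ℝ) + 1/2) * (t + Real.log ((n : ℝ) + 1/2))^2) +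
          1 / (24 * (n : ℝ)^2 * (t + Real.log (n : ℝ))^2) +
          1 / (12 * (n : ℝ)^2 * (t + Real.log (n : ℝ))^3) := by
  intro n hn
  have hN1 : (1:ℝ) ≤ (N:ℝ) := by exact_mod_cast hN
  have hc2 : 0 < t + Real.log (N:ℝ) := by linarith
  have hnN : (N:ℝ) ≤ (n:ℝ) := by exact_mod_cast hn
  have hn1 : (1:ℝ) ≤ (n:ℝ) := le_trans hN1 hnN
  have hnNat1 : 1 ≤ n := le_trans hN hn
  have hfun : (fun x:ℝ => 1/(t+Real.log x)) = qq t 0 1 := funext fun x => by simp [qq]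
  -- the summand
  set aa : ℕ → ℝ := fun k => (∫ x in (k:ℝ)..((k:ℝ)+1), qq t 0 1 x)
    - 1/((harmonic k : ℝ) - Real.eulerMascheroniConstant + t) with haa
  -- Step 1 : partial sums identity
  have hthet : ∀ m:ℕ, thetaSeq N t m = (∫ x in ((N:ℕ):ℝ)..((m:ℕ):ℝ), qq t 0 1 x)
      - ∑ k ∈ Finset.Ico N m, 1/((harmonic k:ℝ) - Real.eulerMascheroniConstant + t) := by
    intro m; unfold thetaSeq; rw [hfun]
  have hsplit : ∀ m:ℕ, n ≤ m → (∫ x in (n:ℝ)..(m:ℝ), qq t 0 1 x)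
      = ∑ k ∈ Finset.Ico n m, ∫ x in (k:ℝ)..((k:ℝ)+1), qq t 0 1 x := by
    intro m hm
    induction m, hm using Nat.le_induction with
    | base => simp
    | succ m hm ih =>
      have hmc : (N:ℝ) ≤ (m:ℝ) := le_trans hnN (by exact_mod_cast hm)
      rw [Finset.sum_Ico_succ_top (by omega : n ≤ m), ← ih]
      push_cast
      rw [← intervalIntegral.integral_add_adjacent_intervals
        (hfi_spec hN1 hc2 hnN (by exact_mod_cast hm : (n:ℝ) ≤ (m:ℝ)))
        (hfi_spec hN1 hc2 hmc (by linarith : (m:ℝ) ≤ (m:ℝ)+1))]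
  have hS : ∀ m:ℕ, n ≤ m →
      thetaSeq N t m - thetaSeq N t n = ∑ k ∈ Finset.Ico n m, aa k := by
    intro m hm
    have hmc : (N:ℝ) ≤ (m:ℝ) := le_trans hnN (by exact_mod_cast hm)
    rw [hthet m, hthet n]
    have hint : (∫ x in ((N:ℕ):ℝ)..((m:ℕ):ℝ), qq t 0 1 x)
        - (∫ x in ((N:ℕ):ℝ)..((n:ℕ):ℝ), qq t 0 1 x)
        = ∫ x in (n:ℝ)..(m:ℝ), qq t 0 1 x :=
      intervalIntegral.integral_interval_sub_left
        (hfi_spec hN1 hc2 (le_refl _) hmc) (hfi_spec hN1 hc2 (le_refl _) hnN)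
    have hsum : ∑ k ∈ Finset.Ico N n, (1:ℝ)/((harmonic k:ℝ) - Real.eulerMascheroniConstant + t)
        + ∑ k ∈ Finset.Ico n m, (1:ℝ)/((harmonic k:ℝ) - Real.eulerMascheroniConstant + t)
        = ∑ k ∈ Finset.Ico N m, (1:ℝ)/((harmonic k:ℝ) - Real.eulerMascheroniConstant + t) :=
      Finset.sum_Ico_consecutive _ hn hm
    have := hsplit m hm
    rw [haa]
    rw [Finset.sum_sub_distrib]
    rw [← this, ← hsum, ← hint]
    ring
  have hStend : Filter.Tendsto (fun m => ∑ k ∈ Finset.Ico n m, aa k) Filter.atTop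
      (𝓝 (L - thetaSeq N t n)) := by
    apply (hL.sub_const (thetaSeq N t n)).congr'
    filter_upwards [Filter.eventually_ge_atTop n] with m hm
    exact hS m hm
  -- eta and delta bounds
  have hkc : ∀ k : ℕ, n ≤ k → (N:ℝ) ≤ (k:ℝ) := fun k hk =>
    le_trans hnN (by exact_mod_cast hk)
  have heta : ∀ k : ℕ, n ≤ k →
      ((qq t 2 2 ((k:ℝ)+1) + 2*qq t 2 3 ((k:ℝ)+1))/24
          ≤ (∫ x in (k:ℝ)..((k:ℝ)+1), qq t 0 1 x) - qq t 0 1 ((k:ℝ)+1/2) ∧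
        (∫ x in (k:ℝ)..((k:ℝ)+1), qq t 0 1 x) - qq t 0 1 ((k:ℝ)+1/2)
          ≤ (qq t 2 2 (k:ℝ) + 2*qq t 2 3 (k:ℝ))/24) :=
    fun k hk => eta_bounds_spec hN1 hc2 (hkc k hk)
  have hdelta : ∀ k : ℕ, n ≤ k →
      (qq t 2 2 ((k:ℝ)+1)/24
          ≤ qq t 0 1 ((k:ℝ)+1/2) - 1/((harmonic k : ℝ) - Real.eulerMascheroniConstant + t) ∧
        qq t 0 1 ((k:ℝ)+1/2) - 1/((harmonic k : ℝ) - Real.eulerMascheroniConstant + t)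
          ≤ qq t 2 2 ((k:ℝ)+1/2)/24) :=
    fun k hk => delta_bounds_spec hN1 hc2 k (le_trans hnNat1 hk) (hkc k hk)
  constructor
  · -- LOWER BOUND
    set B : ℕ → ℝ := fun m => (qq t 1 2 ((n:ℝ)+1) - qq t 1 2 ((m:ℝ)+1))/24
      + (∫ x in ((n:ℝ)+1)..((m:ℝ)+1), qq t 2 2 x)/24 with hB
    have hBle : ∀ m : ℕ, n ≤ m → B m ≤ ∑ k ∈ Finset.Ico n m, aa k := by
      intro m hm
      have h1 := le_sumF2succ hN1 hc2 n hnN m hm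
      have h2 := le_sumGsucc hN1 hc2 n hnN m hm
      have h3 : ∑ k ∈ Finset.Ico n m, ((qq t 2 2 ((k:ℝ)+1) + 2*qq t 2 3 ((k:ℝ)+1))/24
          + qq t 2 2 ((k:ℝ)+1)/24) ≤ ∑ k ∈ Finset.Ico n m, aa k := by
        apply Finset.sum_le_sum
        intro k hk
        have hk' : n ≤ k := (Finset.mem_Ico.mp hk).1
        have e1 := (heta k hk').1
        have e2 := (hdelta k hk').1
        rw [haa]
        dsimp only
        linarith
      rw [hB]
      dsimp only
      have h4 : ∑ k ∈ Finset.Ico n m, ((qq t 2 2 ((k:ℝ)+1) + 2*qq t 2 3 ((k:ℝ)+1))/24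
            + qq t 2 2 ((k:ℝ)+1)/24)
          = (∑ k ∈ Finset.Ico n m, (qq t 2 2 ((k:ℝ)+1) + 2*qq t 2 3 ((k:ℝ)+1)))/24
            + (∑ k ∈ Finset.Ico n m, qq t 2 2 ((k:ℝ)+1))/24 := by
        rw [Finset.sum_add_distrib, ← Finset.sum_div, ← Finset.sum_div]
      rw [h4] at h3
      have h5 : (qq t 1 2 ((n:ℝ)+1) - qq t 1 2 ((m:ℝ)+1))/24
          ≤ (∑ k ∈ Finset.Ico n m, (qq t 2 2 ((k:ℝ)+1) + 2*qq t 2 3 ((k:ℝ)+1)))/24 :=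
        div_le_div_of_nonneg_right h1 (by norm_num)
      have h6 : (∫ x in ((n:ℝ)+1)..((m:ℝ)+1), qq t 2 2 x)/24
          ≤ (∑ k ∈ Finset.Ico n m, qq t 2 2 ((k:ℝ)+1))/24 :=
        div_le_div_of_nonneg_right h2 (by norm_num)
      linarith
    have tend1 : Filter.Tendsto (fun m:ℕ => qq t 1 2 ((m:ℝ)+1)) Filter.atTop (𝓝 0) := by
      apply squeeze_zero' (g := fun m:ℕ => (1/(t+Real.log (N:ℝ))^2) * (1/(m:ℝ)))
      · filter_upwards [Filter.eventually_ge_atTop n] with m hm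
        exact (qq_pos 1 2 (by
            have := hkc m hm; linarith) (upos hN1 hc2 (by have := hkc m hm; linarith))).le
      · filter_upwards [Filter.eventually_ge_atTop n] with m hm
        have hmc := hkc m hm
        have hm1 : (1:ℝ) ≤ (m:ℝ) := le_trans hn1 (by exact_mod_cast hm)
        have hum : 0 < t + Real.log ((m:ℝ)+1) := upos hN1 hc2 (by linarith)
        have huc : t + Real.log (N:ℝ) ≤ t + Real.log ((m:ℝ)+1) := by
          have := Real.log_le_log (by linarith : (0:ℝ) < (N:ℝ)) (by linarith : (N:ℝ) ≤ (m:ℝ)+1)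
          linarith
        have e0 : (1/(t+Real.log (N:ℝ))^2) * (1/(m:ℝ))
            = 1/((m:ℝ) * (t+Real.log (N:ℝ))^2) := by
          rw [div_mul_div_comm, one_mul, mul_comm]
        rw [e0]
        unfold qq
        apply one_div_le_one_div_of_le (by positivity)
        rw [pow_one]
        have : (t+Real.log (N:ℝ))^2 ≤ (t+Real.log ((m:ℝ)+1))^2 :=
          pow_le_pow_left₀ hc2.le huc 2
        nlinarith
      · have := tendsto_one_div_atTop_nhds_zero_nat.const_mul (1/(t+Real.log (N:ℝ))^2)
        simpa using this
    have tend2 : Filter.Tendsto (fun m:ℕ => ∫ x in ((n:ℝ)+1)..((m:ℝ)+1), qq t 2 2 x)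
        Filter.atTop (𝓝 (∫ x in Set.Ioi ((n:ℝ)+1), qq t 2 2 x)) := by
      apply MeasureTheory.intervalIntegral_tendsto_integral_Ioi
      · exact integrableG_spec hN1 hc2 (by linarith : (N:ℝ) ≤ (n:ℝ)+1)
      · exact Filter.tendsto_atTop_add_const_right _ 1 tendsto_natCast_atTop_atTop
    have hBlim : Filter.Tendsto B Filter.atTop
        (𝓝 (qq t 1 2 ((n:ℝ)+1)/24 + (∫ x in Set.Ioi ((n:ℝ)+1), qq t 2 2 x)/24)) := by
      rw [hB]
      have := ((((tendsto_const_nhds (x := qq t 1 2 ((n:ℝ)+1))).sub tend1).div_const 24).add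
        (tend2.div_const 24))
      simpa using this
    have hfinal := le_of_tendsto_of_tendsto hBlim hStend
      (by filter_upwards [Filter.eventually_ge_atTop n] with m hm; exact hBle m hm)
    -- rewrite to statement form
    have hIeq : (∫ x in Set.Ioi ((n:ℝ)+1), 1/(24*x^2*(t+Real.log x)^2))
        = (∫ x in Set.Ioi ((n:ℝ)+1), qq t 2 2 x)/24 := by
      have hpt : ∀ x:ℝ, 1/(24*x^2*(t+Real.log x)^2) = qq t 2 2 x/24 := fun x => by
        unfold qq; rw [div_div]; congr 1; ring
      simp_rw [hpt]
      exact MeasureTheory.integral_div 24 _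
    have hq12eq : qq t 1 2 ((n:ℝ)+1)/24
        = 1/(24*((n:ℝ)+1)*(t+Real.log ((n:ℝ)+1))^2) := by
      unfold qq; rw [div_div, pow_one]; congr 1; ring
    rw [hIeq, ← hq12eq]
    linarith
  · -- UPPER BOUND
    have hUpper : ∀ m : ℕ, n+1 ≤ m → ∑ k ∈ Finset.Ico n m, aa k
        ≤ (qq t 2 2 (n:ℝ) + 2*qq t 2 3 (n:ℝ))/24 + qq t 1 2 ((n:ℝ)+1/2)/24
          + (∫ x in Set.Ioi (n:ℝ), qq t 2 2 x)/24 := by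
      intro m hm
      have hmn : n < m := by omega
      have hmnn : n ≤ m := by omega
      -- split sum into eta and delta parts
      have hsplit2 : ∑ k ∈ Finset.Ico n m, aa k
          = (∑ k ∈ Finset.Ico n m, ((∫ x in (k:ℝ)..((k:ℝ)+1), qq t 0 1 x) - qq t 0 1 ((k:ℝ)+1/2)))
            + ∑ k ∈ Finset.Ico n m,
              (qq t 0 1 ((k:ℝ)+1/2) - 1/((harmonic k : ℝ) - Real.eulerMascheroniConstant + t)) := by
        rw [← Finset.sum_add_distrib]
        apply Finset.sum_congr rfl
        intro k _
        rw [haa]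
        ring
      rw [hsplit2]
      -- eta part
      have hetasum : (∑ k ∈ Finset.Ico n m,
            ((∫ x in (k:ℝ)..((k:ℝ)+1), qq t 0 1 x) - qq t 0 1 ((k:ℝ)+1/2)))
          ≤ (qq t 2 2 (n:ℝ) + 2*qq t 2 3 (n:ℝ))/24 + qq t 1 2 ((n:ℝ)+1/2)/24 := by
        rw [Finset.sum_eq_sum_Ico_succ_bot hmn]
        have hb1 := (heta n (le_refl n)).2
        have hb2 : ∑ k ∈ Finset.Ico (n+1) m,
            ((∫ x in (k:ℝ)..((k:ℝ)+1), qq t 0 1 x) - qq t 0 1 ((k:ℝ)+1/2))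
            ≤ ∑ k ∈ Finset.Ico (n+1) m, (qq t 2 2 (k:ℝ) + 2*qq t 2 3 (k:ℝ))/24 := by
          apply Finset.sum_le_sum
          intro k hk
          have hk' := (Finset.mem_Ico.mp hk).1
          exact (heta k (by omega : n ≤ k)).2
        have hb3 : ∑ k ∈ Finset.Ico (n+1) m, (qq t 2 2 (k:ℝ) + 2*qq t 2 3 (k:ℝ))/24
            = (∑ k ∈ Finset.Ico (n+1) m, (qq t 2 2 (k:ℝ) + 2*qq t 2 3 (k:ℝ)))/24 :=
          (Finset.sum_div _ _ _).symm
        have hb4 := sumF2_le hN1 hc2 n hnN m hm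
        have hm12 : (N:ℝ) ≤ (m:ℝ)-1/2 := by
          have : ((n:ℝ)+1) ≤ (m:ℝ) := by exact_mod_cast hm
          linarith
        have hb5 : 0 < qq t 1 2 ((m:ℝ)-1/2) :=
          qq_pos 1 2 (by linarith) (upos hN1 hc2 hm12)
        have hb6 : (∑ k ∈ Finset.Ico (n+1) m, (qq t 2 2 (k:ℝ) + 2*qq t 2 3 (k:ℝ)))/24
            ≤ qq t 1 2 ((n:ℝ)+1/2)/24 := by
          apply div_le_div_of_nonneg_right _ (by norm_num)
          linarith
        rw [hb3] at hb2
        linarith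
      -- delta part
      have hdeltasum : (∑ k ∈ Finset.Ico n m,
            (qq t 0 1 ((k:ℝ)+1/2) - 1/((harmonic k : ℝ) - Real.eulerMascheroniConstant + t)))
          ≤ (∫ x in Set.Ioi (n:ℝ), qq t 2 2 x)/24 := by
        have hb2 : ∑ k ∈ Finset.Ico n m,
            (qq t 0 1 ((k:ℝ)+1/2) - 1/((harmonic k : ℝ) - Real.eulerMascheroniConstant + t))
            ≤ ∑ k ∈ Finset.Ico n m, qq t 2 2 ((k:ℝ)+1/2)/24 := by
          apply Finset.sum_le_sum
          intro k hk
          exact (hdelta k (Finset.mem_Ico.mp hk).1).2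
        have hb3 : ∑ k ∈ Finset.Ico n m, qq t 2 2 ((k:ℝ)+1/2)/24
            = (∑ k ∈ Finset.Ico n m, qq t 2 2 ((k:ℝ)+1/2))/24 := (Finset.sum_div _ _ _).symm
        have hb4 := sumGmid_le hN1 hc2 n hnN m hmnn
        have hb5 := intG_le_Ioi_spec hN1 hc2 hnN (by exact_mod_cast hmnn : (n:ℝ) ≤ (m:ℝ))
        rw [hb3] at hb2
        have hb6 : (∑ k ∈ Finset.Ico n m, qq t 2 2 ((k:ℝ)+1/2))/24
            ≤ (∫ x in Set.Ioi (n:ℝ), qq t 2 2 x)/24 := by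
          apply div_le_div_of_nonneg_right _ (by norm_num)
          linarith
        linarith
      linarith
    have hfinal := le_of_tendsto hStend
      (by filter_upwards [Filter.eventually_ge_atTop (n+1)] with m hm; exact hUpper m hm)
    -- rewrite to statement form
    have hIeq : (∫ x in Set.Ioi ((n:ℝ)), 1/(24*x^2*(t+Real.log x)^2))
        = (∫ x in Set.Ioi ((n:ℝ)), qq t 2 2 x)/24 := by
      have hpt : ∀ x:ℝ, 1/(24*x^2*(t+Real.log x)^2) = qq t 2 2 x/24 := fun x => by
        unfold qq; rw [div_div]; congr 1; ring
      simp_rw [hpt]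
      exact MeasureTheory.integral_div 24 _
    have hq12eq : qq t 1 2 ((n:ℝ)+1/2)/24
        = 1/(24*((n:ℝ)+1/2)*(t+Real.log ((n:ℝ)+1/2))^2) := by
      unfold qq; rw [div_div, pow_one]; congr 1; ring
    have hq22eq : qq t 2 2 (n:ℝ)/24 = 1/(24*(n:ℝ)^2*(t+Real.log (n:ℝ))^2) := by
      unfold qq; rw [div_div]; congr 1; ring
    have hq23eq : 2*qq t 2 3 (n:ℝ)/24 = 1/(12*(n:ℝ)^2*(t+Real.log (n:ℝ))^3) := by
      have e : 2*qq t 2 3 (n:ℝ)/24 = qq t 2 3 (n:ℝ)/12 := by ring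
      rw [e]
      unfold qq; rw [div_div]; congr 1; ring
    have hF2 : (qq t 2 2 (n:ℝ) + 2*qq t 2 3 (n:ℝ))/24
        = qq t 2 2 (n:ℝ)/24 + 2*qq t 2 3 (n:ℝ)/24 := by ring
    rw [hIeq, ← hq12eq, ← hq22eq, ← hq23eq]
    rw [hF2] at hfinal
    linarith
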